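/- Let λ = √3 and f(z) = ((λ − 1)z + 1)/(−z + λ + 1). Then for every z ∈ ℂ with |z| ≤ 1 + λ and z ≠ 1 + λ, the real part of f(z) satisfies Re(f(z)) ≥ −1/(2(λ + 1)); that is, f maps the closed disk of radius 1 + √3 centered at 0 (minus its pole) into the closed half-plane to the right of the vertical line Re(w) = −1/(2(√3 + 1)). -/

import Mathlib

open Complex

/-- The Möbius map `f(z) = ((√3 − 1)z + 1)/(−z + √3 + 1)`. -/
noncomputable def apollonianF (z : ℂ) : ℂ :=
  ((Real.sqrt 3 - 1) * z + 1) / (-z + Real.sqrt 3 + 1)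

/-- For every `z` with `|z| ≤ 1 + √3` and `z ≠ 1 + √3`, one has
`Re(f(z)) ≥ −1/(2(√3 + 1))`. -/
theorem apollonianF_re_lower_bound (z : ℂ)
    (hz : ‖z‖ ≤ 1 + Real.sqrt 3) (hz' : z ≠ (1 + Real.sqrt 3 : ℝ)) :
    -(1 / (2 * (Real.sqrt 3 + 1))) ≤ (apollonianF z).re := by
  set s : ℝ := Real.sqrt 3 with hs
  have hs3 : s ^ 2 = 3 := Real.sq_sqrt (by norm_num)
  have hs0 : (1:ℝ) ≤ s := by nlinarith [Real.sqrt_nonneg 3]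
  have h2 : (0:ℝ) < 2 * (s + 1) := by linarith
  have hden : (-z + s + 1) ≠ 0 := by
    intro h
    apply hz'
    have : z = (s : ℂ) + 1 := by linear_combination -h
    rw [this]; push_cast; ring
  have hn : 0 < Complex.normSq (-z + (s:ℂ) + 1) := Complex.normSq_pos.mpr hden
  have habs : z.re ^ 2 + z.im ^ 2 ≤ (1 + s) ^ 2 := by
    have h1 : ‖z‖ ^ 2 ≤ (1 + s) ^ 2 :=
      pow_le_pow_left₀ (norm_nonneg z) hz 2
    rw [Complex.sq_norm, Complex.normSq_apply] at h1
    nlinarith [h1]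
  rw [apollonianF, Complex.div_re]
  rw [Complex.normSq_apply] at hn ⊢
  simp only [Complex.add_re, Complex.add_im, Complex.neg_re, Complex.neg_im,
    Complex.mul_re, Complex.mul_im, Complex.one_re, Complex.one_im,
    Complex.sub_re, Complex.sub_im, Complex.ofReal_re, Complex.ofReal_im] at hn ⊢
  rw [← hs]
  rw [← add_div, show -(1 / (2 * (s + 1))) = (-1) / (2 * (s + 1)) by ring,
    div_le_div_iff₀ h2 hn]
  have e : (((s - 1) * z.re - (0 - 0) * z.im + 1) * (-z.re + s + 1) +
      ((s - 1) * z.im + (0 - 0) * z.re + 0) * (-z.im + 0 + 0)) * (2 * (s + 1)) +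
      ((-z.re + s + 1) * (-z.re + s + 1) + (-z.im + 0 + 0) * (-z.im + 0 + 0)) =
      3 * (1 + s) ^ 2 - 3 * (z.re ^ 2 + z.im ^ 2) := by
    linear_combination (2 * (s + 1) * z.re - 2 * (z.re ^ 2 + z.im ^ 2)) * hs3
  linarith
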